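/- For every real s > −2 and every z ∈ [0,1): S_s(z) = ∫_0^1 t^{s+1} (1−t²)^{s/2} (1−z t²)^{−s/2} dt = ( Γ(s/2+1)² / (2 Γ(s+2)) ) · ₂F₁( s/2, s/2+1; s+2; z ). -/

import Mathlib

open MeasureTheory Real

/-- The special function `S_s(z) = ∫₀¹ t^{s+1} (1-t²)^{s/2} (1-zt²)^{-s/2} dt`. -/
noncomputable def Sfun (s z : ℝ) : ℝ :=
  ∫ t in Set.Ioo (0 : ℝ) 1,
    t ^ (s + 1) * (1 - t ^ 2) ^ (s / 2) * (1 - z * t ^ 2) ^ (-(s / 2))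

/-- The Gauss hypergeometric series `₂F₁(a,b;c;z) = ∑ (a)_n (b)_n / ((c)_n n!) zⁿ`,
where `(a)_n` is the Pochhammer (rising factorial) symbol. -/
noncomputable def twoF1 (a b c z : ℝ) : ℝ :=
  ∑' n : ℕ,
    ((ascPochhammer ℝ n).eval a * (ascPochhammer ℝ n).eval b
      / ((ascPochhammer ℝ n).eval c * (n.factorial : ℝ))) * z ^ n

/-- Iterated derivative of `w ↦ (1-w)^(-a)` on the unit disk. -/
lemma iteratedDeriv_one_sub_cpow (a : ℂ) (n : ℕ) :
    ∀ z : ℂ, ‖z‖ < 1 →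
      iteratedDeriv n (fun w : ℂ => (1 - w) ^ (-a)) z
        = (ascPochhammer ℂ n).eval a * (1 - z) ^ (-a - n) := by
  induction n with
  | zero =>
    intro z hz
    simp [iteratedDeriv_zero]
  | succ n ih =>
    intro z hz
    have hopen : ∀ w : ℂ, ‖w‖ < 1 → (1 - w) ∈ Complex.slitPlane := by
      intro w hw
      refine Or.inl ?_
      have : |w.re| ≤ ‖w‖ := Complex.abs_re_le_norm w
      simp only [Complex.sub_re, Complex.one_re]
      have := abs_le.1 this
      linarith [this.2]
    rw [iteratedDeriv_succ]
    have hev : iteratedDeriv n (fun w : ℂ => (1 - w) ^ (-a))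
        =ᶠ[nhds z] fun w => (ascPochhammer ℂ n).eval a * (1 - w) ^ (-a - n) := by
      have hmem : Metric.ball (0 : ℂ) 1 ∈ nhds z := by
        exact Metric.isOpen_ball.mem_nhds (by simpa using hz)
      filter_upwards [hmem] with w hw
      exact ih w (by simpa using hw)
    rw [hev.deriv_eq]
    have hd : HasDerivAt (fun w : ℂ => (1 - w) ^ (-a - n))
        ((-a - n) * (1 - z) ^ (-a - n - 1) * (-1)) z := by
      have h1 : HasDerivAt (fun w : ℂ => 1 - w) (-1) z := by
        simpa using (hasDerivAt_id z).const_sub 1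
      exact h1.cpow_const (hopen z hz)
    rw [(hd.const_mul ((ascPochhammer ℂ n).eval a)).deriv, ascPochhammer_succ_eval,
      show (-a - ((n:ℕ):ℂ) - 1 : ℂ) = -a - (((n+1 : ℕ)):ℂ) by push_cast; ring]
    push_cast
    ring

/-- Binomial series, complex version. -/
lemma hasSum_binomial_complex (a : ℂ) {x : ℂ} (hx : ‖x‖ < 1) :
    HasSum (fun n : ℕ => (ascPochhammer ℂ n).eval a / n.factorial * x ^ n)
      ((1 - x) ^ (-a)) := by
  set f : ℂ → ℂ := fun w => (1 - w) ^ (-a) with hf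
  obtain ⟨R, hR1, hxR⟩ : ∃ R : NNReal, (R : ℝ) < 1 ∧ ‖x‖ < R := by
    have h0 : (0:ℝ) ≤ (‖x‖ + 1) / 2 := by positivity
    refine ⟨⟨(‖x‖ + 1) / 2, h0⟩, ?_, ?_⟩ <;>
      · show _ < _
        dsimp only [NNReal.toReal]
        linarith
  have hdiff : DifferentiableOn ℂ f (Metric.closedBall 0 R) := by
    intro w hw
    have hw1 : ‖w‖ < 1 := by
      simp only [Metric.mem_closedBall, dist_zero_right] at hw
      exact lt_of_le_of_lt hw hR1
    have h1 : HasDerivAt (fun w : ℂ => 1 - w) (-1) w := by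
      simpa using (hasDerivAt_id w).const_sub 1
    have hsp : (1 - w) ∈ Complex.slitPlane := by
      refine Or.inl ?_
      have : |w.re| ≤ ‖w‖ := Complex.abs_re_le_norm w
      simp only [Complex.sub_re, Complex.one_re]
      linarith [(abs_le.1 this).2]
    exact ((h1.cpow_const hsp).differentiableAt).differentiableWithinAt
  have hR0 : 0 < R := by
    have : (0:ℝ) < R := lt_of_le_of_lt (norm_nonneg x) hxR
    exact_mod_cast this
  have hball := hdiff.hasFPowerSeriesOnBall hR0
  have hxmem : x ∈ Metric.eball (0 : ℂ) R := by
    rw [mem_emetric_ball_zero_iff]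
    exact_mod_cast hxR
  have hsum := hball.hasSum_iteratedFDeriv hxmem
  simp only [zero_add] at hsum
  convert hsum using 3 with n
  · rfl
  have happly : (iteratedFDeriv ℂ n f 0) (fun _ => x)
      = x ^ n • iteratedDeriv n f 0 := by
    have : (fun _ : Fin n => x) = fun _ : Fin n => x • (1:ℂ) := by simp
    rw [iteratedDeriv, this, ContinuousMultilinearMap.map_smul_univ]
    simp
  rw [happly, iteratedDeriv_one_sub_cpow a n 0 (by simp)]
  simp only [sub_zero, Complex.one_cpow, mul_one, Polynomial.eval_one]
  rw [smul_eq_mul, smul_eq_mul]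
  field_simp

/-- Binomial series, real version: `(1-x)^(-a) = ∑ (a)_n/n! xⁿ` for `0 ≤ x < 1`. -/
lemma hasSum_binomial_real (a : ℝ) {x : ℝ} (h0 : 0 ≤ x) (h1 : x < 1) :
    HasSum (fun n : ℕ => (ascPochhammer ℝ n).eval a / n.factorial * x ^ n)
      ((1 - x) ^ (-a)) := by
  have hx : ‖(x : ℂ)‖ < 1 := by
    rw [Complex.norm_real, Real.norm_eq_abs]
    rwa [_root_.abs_of_nonneg h0]
  have h := hasSum_binomial_complex (a : ℂ) hx
  have hpoch : ∀ n : ℕ, (ascPochhammer ℂ n).eval (a : ℂ)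
      = (((ascPochhammer ℝ n).eval a : ℝ) : ℂ) := by
    intro n
    induction n with
    | zero => simp
    | succ n ih =>
      rw [ascPochhammer_succ_eval, ascPochhammer_succ_eval, ih]
      push_cast
      ring
  have hterm : (fun n : ℕ => (ascPochhammer ℂ n).eval (a : ℂ) / n.factorial * (x:ℂ) ^ n)
      = fun n : ℕ => (((ascPochhammer ℝ n).eval a / n.factorial * x ^ n : ℝ) : ℂ) := by
    funext n
    rw [hpoch n]
    push_cast
    ring
  rw [hterm] at h
  have hval : ((1 : ℂ) - (x:ℂ)) ^ (-(a:ℂ)) = (((1 - x) ^ (-a) : ℝ) : ℂ) := by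
    rw [Complex.ofReal_cpow (by linarith) (-a)]
    push_cast
    ring_nf
  rw [hval] at h
  have := Complex.reCLM.hasSum h
  simpa [← Complex.ofReal_pow] using this

/-- Pochhammer-Gamma recursion: `Γ(x+n) = (x)_n Γ(x)` for `x > 0`. -/
lemma Real.Gamma_add_nat {x : ℝ} (hx : 0 < x) (n : ℕ) :
    Real.Gamma (x + n) = (ascPochhammer ℝ n).eval x * Real.Gamma x := by
  induction n with
  | zero => simp
  | succ n ih =>
    have hxn : x + n ≠ 0 := by positivity
    have : x + ((n:ℝ) + 1) = (x + n) + 1 := by ring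
    rw [Nat.cast_succ, this, Real.Gamma_add_one hxn, ih, ascPochhammer_succ_eval]
    ring

/-- `(x)_n ≥ 0` when `x ≥ 0`. -/
lemma ascPochhammer_eval_nonneg {x : ℝ} (hx : 0 ≤ x) (n : ℕ) :
    0 ≤ (ascPochhammer ℝ n).eval x := by
  induction n with
  | zero => simp
  | succ n ih =>
    rw [ascPochhammer_succ_eval]
    have : (0:ℝ) ≤ x + n := by positivity
    exact mul_nonneg ih this

/-- Monotonicity of `(·)_n` on nonneg reals. -/
lemma ascPochhammer_eval_le_of_le {x y : ℝ} (hx : 0 ≤ x) (hxy : x ≤ y) (n : ℕ) :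
    (ascPochhammer ℝ n).eval x ≤ (ascPochhammer ℝ n).eval y := by
  induction n with
  | zero => simp
  | succ n ih =>
    rw [ascPochhammer_succ_eval, ascPochhammer_succ_eval]
    have h1 : (0:ℝ) ≤ x + n := by positivity
    have h2 : x + n ≤ y + n := by linarith
    exact mul_le_mul ih h2 h1 (ascPochhammer_eval_nonneg (hx.trans hxy) n)

/-- `|(x)_n| ≤ (|x|)_n`. -/
lemma abs_ascPochhammer_eval_le (x : ℝ) (n : ℕ) :
    |(ascPochhammer ℝ n).eval x| ≤ (ascPochhammer ℝ n).eval |x| := by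
  induction n with
  | zero => simp
  | succ n ih =>
    rw [ascPochhammer_succ_eval, ascPochhammer_succ_eval, abs_mul]
    refine mul_le_mul ih ?_ (abs_nonneg _) (ascPochhammer_eval_nonneg (abs_nonneg x) n)
    calc |x + (n:ℝ)| ≤ |x| + |(n:ℝ)| := abs_add_le _ _
    _ = |x| + n := by rw [_root_.abs_of_nonneg (by positivity : (0:ℝ) ≤ (n:ℝ))]

/-- Integrability of the Beta integrand on `(0,1)`. -/
lemma betaReal_integrableOn {p q : ℝ} (hp : 0 < p) (hq : 0 < q) :
    IntegrableOn (fun u : ℝ => u ^ (p - 1) * (1 - u) ^ (q - 1)) (Set.Ioo 0 1) := by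
  have hc : IntervalIntegrable
      (fun x : ℝ => (x : ℂ) ^ ((p:ℂ) - 1) * ((1:ℂ) - x) ^ ((q:ℂ) - 1)) volume 0 1 :=
    Complex.betaIntegral_convergent (by simpa using hp) (by simpa using hq)
  have hcIoo : IntegrableOn
      (fun x : ℝ => (x : ℂ) ^ ((p:ℂ) - 1) * ((1:ℂ) - x) ^ ((q:ℂ) - 1)) (Set.Ioo 0 1) := by
    have := (intervalIntegrable_iff_integrableOn_Ioc_of_le (by norm_num : (0:ℝ) ≤ 1)).1 hc
    exact this.mono_set Set.Ioo_subset_Ioc_self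
  have hre : IntegrableOn
      (fun x : ℝ => ((x : ℂ) ^ ((p:ℂ) - 1) * ((1:ℂ) - x) ^ ((q:ℂ) - 1)).re)
      (Set.Ioo 0 1) := hcIoo.re
  refine MeasureTheory.IntegrableOn.congr_fun hre ?_ measurableSet_Ioo
  intro x hx
  obtain ⟨hx0, hx1⟩ := hx
  have h1 : ((x : ℂ)) ^ ((p:ℂ) - 1) = ((x ^ (p - 1) : ℝ) : ℂ) := by
    rw [Complex.ofReal_cpow hx0.le]
    push_cast
    ring_nf
  have h2 : ((1:ℂ) - x) ^ ((q:ℂ) - 1) = (((1 - x) ^ (q - 1) : ℝ) : ℂ) := by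
    rw [Complex.ofReal_cpow (by linarith)]
    push_cast
    ring_nf
  simp [h1, h2, ← Complex.ofReal_mul]

/-- The real Beta integral over `(0,1)` in terms of `Γ`. -/
lemma betaReal_eq {p q : ℝ} (hp : 0 < p) (hq : 0 < q) :
    ∫ u in Set.Ioo (0:ℝ) 1, u ^ (p - 1) * (1 - u) ^ (q - 1)
      = Real.Gamma p * Real.Gamma q / Real.Gamma (p + q) := by
  have key := Complex.Gamma_mul_Gamma_eq_betaIntegral
    (s := (p:ℂ)) (t := (q:ℂ)) (by simpa using hp) (by simpa using hq)
  have hbeta : Complex.betaIntegral p q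
      = ((∫ u in Set.Ioo (0:ℝ) 1, u ^ (p - 1) * (1 - u) ^ (q - 1) : ℝ) : ℂ) := by
    rw [Complex.betaIntegral, intervalIntegral.integral_of_le (by norm_num : (0:ℝ) ≤ 1),
      MeasureTheory.integral_Ioc_eq_integral_Ioo]
    rw [show ((∫ u in Set.Ioo (0:ℝ) 1, u ^ (p - 1) * (1 - u) ^ (q - 1) : ℝ) : ℂ)
      = ∫ u in Set.Ioo (0:ℝ) 1, ((u ^ (p - 1) * (1 - u) ^ (q - 1) : ℝ) : ℂ) from
      (integral_ofReal).symm]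
    refine setIntegral_congr_fun measurableSet_Ioo ?_
    intro x hx
    obtain ⟨hx0, hx1⟩ := hx
    have h1 : ((x : ℂ)) ^ ((p:ℂ) - 1) = ((x ^ (p - 1) : ℝ) : ℂ) := by
      rw [Complex.ofReal_cpow hx0.le]; push_cast; ring_nf
    have h2 : ((1:ℂ) - x) ^ ((q:ℂ) - 1) = (((1 - x) ^ (q - 1) : ℝ) : ℂ) := by
      rw [Complex.ofReal_cpow (by linarith)]; push_cast; ring_nf
    simp [h1, h2]
  rw [hbeta, Complex.Gamma_ofReal, Complex.Gamma_ofReal, show ((p:ℂ) + q) = ((p + q : ℝ) : ℂ) by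
    push_cast; ring, Complex.Gamma_ofReal] at key
  have hne : Real.Gamma (p + q) ≠ 0 := (Real.Gamma_pos_of_pos (by linarith)).ne'
  have key2 : Real.Gamma p * Real.Gamma q
      = Real.Gamma (p + q) * ∫ u in Set.Ioo (0:ℝ) 1, u ^ (p - 1) * (1 - u) ^ (q - 1) := by
    exact_mod_cast key
  field_simp
  linarith [key2]

/-- Term functions for the series expansion of `Sfun`. -/
noncomputable def Fterm (s z : ℝ) (n : ℕ) (t : ℝ) : ℝ :=
  ((ascPochhammer ℝ n).eval (s/2) / n.factorial * z ^ n)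
    * (t ^ (s + 1) * (1 - t ^ 2) ^ (s / 2) * t ^ (2 * n))


/-- **Hypergeometric representation of `S_s`.** For `s > -2` and `z ∈ [0,1)`,
`S_s(z) = (Γ(s/2+1)² / (2Γ(s+2))) ₂F₁(s/2, s/2+1; s+2; z)`. -/
theorem Sfun_eq_twoF1
    (s : ℝ) (hs : -2 < s) (z : ℝ) (hz : z ∈ Set.Ico (0 : ℝ) 1) :
    Sfun s z
      = Real.Gamma (s / 2 + 1) ^ 2 / (2 * Real.Gamma (s + 2))
          * twoF1 (s / 2) (s / 2 + 1) (s + 2) z := by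
  obtain ⟨hz0, hz1⟩ := hz
  have ha1 : (0:ℝ) < s / 2 + 1 := by linarith
  have hs2 : (0:ℝ) < s + 2 := by linarith
  -- square substitution data
  have hsq_deriv : ∀ t ∈ Set.Ioo (0:ℝ) 1,
      HasDerivWithinAt (fun t : ℝ => t^2) (2*t) (Set.Ioo 0 1) t := by
    intro t _
    simpa using (hasDerivAt_pow 2 t).hasDerivWithinAt
  have hsq_inj : Set.InjOn (fun t : ℝ => t^2) (Set.Ioo 0 1) := by
    intro x hx y hy h
    simp only at h
    rcases mul_eq_zero.1 (show (x - y) * (x + y) = 0 by nlinarith) with h' | h'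
    · linarith [sub_eq_zero.1 h']
    · linarith [hx.1, hy.1]
  have hsq_img : (fun t : ℝ => t^2) '' Set.Ioo 0 1 = Set.Ioo 0 1 := by
    ext u
    constructor
    · rintro ⟨t, ht, rfl⟩
      refine ⟨pow_pos ht.1 2, ?_⟩
      show t^2 < 1
      nlinarith [ht.1, ht.2]
    · intro hu
      refine ⟨Real.sqrt u, ⟨Real.sqrt_pos.2 hu.1, ?_⟩, Real.sq_sqrt hu.1.le⟩
      rw [show (1:ℝ) = Real.sqrt 1 by simp]
      exact Real.sqrt_lt_sqrt hu.1.le hu.2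
  -- pointwise substitution identity
  have hpt : ∀ n : ℕ, ∀ t ∈ Set.Ioo (0:ℝ) 1,
      |2*t| * ((t^2) ^ (s/2 + (n:ℝ)) * (1 - t^2) ^ (s/2))
        = 2 * (t ^ (s + 1) * (1 - t ^ 2) ^ (s / 2) * t ^ (2 * n)) := by
    intro n t ht
    obtain ⟨ht0, ht1⟩ := ht
    have e1 : ((t^2:ℝ)) ^ (s/2 + (n:ℝ)) = t ^ (s + 2*(n:ℝ)) := by
      rw [← Real.rpow_natCast t 2, ← Real.rpow_mul ht0.le]
      congr 1
      push_cast
      ring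
    have e2 : t ^ (2*n) = t ^ (2*(n:ℝ)) := by
      rw [← Real.rpow_natCast t (2*n)]
      congr 1
      push_cast
      ring
    calc |2*t| * ((t^2) ^ (s/2 + (n:ℝ)) * (1 - t^2) ^ (s/2))
        = 2 * (t^(1:ℝ) * t^(s+2*(n:ℝ))) * (1-t^2)^(s/2) := by
          rw [abs_of_pos (by linarith), e1, Real.rpow_one]; ring
      _ = 2 * (t^(s+1) * t^(2*(n:ℝ))) * (1-t^2)^(s/2) := by
          rw [← Real.rpow_add ht0, ← Real.rpow_add ht0]
          ring_nf
      _ = 2 * (t ^ (s + 1) * (1 - t ^ 2) ^ (s / 2) * t ^ (2 * n)) := by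
          rw [e2]; ring
  -- value of the monomial integrals
  have hJ : ∀ n : ℕ,
      (∫ t in Set.Ioo (0:ℝ) 1, t ^ (s + 1) * (1 - t ^ 2) ^ (s / 2) * t ^ (2 * n))
        = Real.Gamma (s/2 + 1 + n) * Real.Gamma (s/2 + 1) / (2 * Real.Gamma (s + 2 + n)) := by
    intro n
    have hsub := MeasureTheory.integral_image_eq_integral_abs_deriv_smul
      measurableSet_Ioo hsq_deriv hsq_inj
      (fun u : ℝ => u ^ (s/2 + (n:ℝ)) * (1 - u) ^ (s/2))
    rw [hsq_img] at hsub
    have hbeta := betaReal_eq (p := s/2 + (n:ℝ) + 1) (q := s/2 + 1)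
      (by linarith [Nat.cast_nonneg (α := ℝ) n]) ha1
    simp only [show s/2 + (n:ℝ) + 1 - 1 = s/2 + (n:ℝ) by ring,
      show s/2 + 1 - 1 = s/2 by ring] at hbeta
    rw [hbeta] at hsub
    have hsub2 : Real.Gamma (s/2 + (n:ℝ) + 1) * Real.Gamma (s/2 + 1)
          / Real.Gamma (s/2 + (n:ℝ) + 1 + (s/2 + 1))
        = ∫ t in Set.Ioo (0:ℝ) 1,
            2 * (t ^ (s + 1) * (1 - t ^ 2) ^ (s / 2) * t ^ (2 * n)) := by
      rw [hsub]
      refine MeasureTheory.setIntegral_congr_fun measurableSet_Ioo ?_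
      intro t ht
      simpa [smul_eq_mul] using hpt n t ht
    rw [MeasureTheory.integral_const_mul] at hsub2
    have harg : s/2 + (n:ℝ) + 1 + (s/2 + 1) = s + 2 + n := by ring
    rw [harg] at hsub2
    have harg2 : s/2 + (n:ℝ) + 1 = s/2 + 1 + n := by ring
    rw [harg2] at hsub2
    have hGpos : (0:ℝ) < Real.Gamma (s + 2 + n) :=
      Real.Gamma_pos_of_pos (by linarith [Nat.cast_nonneg (α := ℝ) n])
    rw [eq_div_iff (by positivity : (2 * Real.Gamma (s + 2 + n)) ≠ 0)]
    rw [div_eq_iff hGpos.ne'] at hsub2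
    linear_combination -hsub2
  -- integrability of the monomial integrands
  have hGint : ∀ n : ℕ, IntegrableOn
      (fun t : ℝ => t ^ (s + 1) * (1 - t ^ 2) ^ (s / 2) * t ^ (2 * n))
      (Set.Ioo 0 1) := by
    intro n
    have hbi := betaReal_integrableOn (p := s/2 + (n:ℝ) + 1) (q := s/2 + 1)
      (by linarith [Nat.cast_nonneg (α := ℝ) n]) ha1
    simp only [show s/2 + (n:ℝ) + 1 - 1 = s/2 + (n:ℝ) by ring,
      show s/2 + 1 - 1 = s/2 by ring] at hbi
    rw [← hsq_img] at hbi
    rw [MeasureTheory.integrableOn_image_iff_integrableOn_abs_deriv_smul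
      measurableSet_Ioo hsq_deriv hsq_inj] at hbi
    have := (hbi.const_mul (1/2 : ℝ))
    refine MeasureTheory.IntegrableOn.congr_fun this ?_ measurableSet_Ioo
    intro t ht
    have h := hpt n t ht
    simp only [smul_eq_mul]
    linarith [h]
  -- nonnegativity of the monomial integrand
  have hGnonneg : ∀ n : ℕ, ∀ t ∈ Set.Ioo (0:ℝ) 1,
      0 ≤ t ^ (s + 1) * (1 - t ^ 2) ^ (s / 2) * t ^ (2 * n) := by
    intro n t ht
    have h1 : (0:ℝ) < t := ht.1
    have h2 : (0:ℝ) ≤ 1 - t^2 := by nlinarith [ht.1, ht.2]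
    positivity
  -- integrability of the terms
  have hFint : ∀ n : ℕ, Integrable (Fterm s z n) (volume.restrict (Set.Ioo 0 1)) := by
    intro n
    exact (hGint n).const_mul _
  -- value of the norm integrals
  have hnormint : ∀ n : ℕ, (∫ t, ‖Fterm s z n t‖ ∂(volume.restrict (Set.Ioo 0 1)))
      = |(ascPochhammer ℝ n).eval (s/2) / n.factorial * z ^ n|
        * (Real.Gamma (s/2 + 1 + n) * Real.Gamma (s/2 + 1)
            / (2 * Real.Gamma (s + 2 + n))) := by
    intro n
    rw [← hJ n, ← MeasureTheory.integral_const_mul]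
    refine MeasureTheory.setIntegral_congr_fun measurableSet_Ioo ?_
    intro t ht
    have h0 := hGnonneg n t ht
    simp only [Fterm, Real.norm_eq_abs, abs_mul]
    rw [_root_.abs_of_nonneg (Real.rpow_nonneg ht.1.le _),
      _root_.abs_of_nonneg (Real.rpow_nonneg (by nlinarith [ht.1, ht.2] : (0:ℝ) ≤ 1 - t^2) _),
      _root_.abs_of_nonneg (pow_nonneg ht.1.le _)]
  -- positivity bounds for the Gamma ratios
  have hGam2pos : (0:ℝ) < Real.Gamma (s + 2) := Real.Gamma_pos_of_pos hs2
  have hGam1pos : (0:ℝ) < Real.Gamma (s/2 + 1) := Real.Gamma_pos_of_pos ha1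
  -- summability of the norm integrals
  have hsum_norm : Summable (fun n : ℕ => ∫ t, ‖Fterm s z n t‖ ∂(volume.restrict (Set.Ioo 0 1))) := by
    have hmaj : Summable (fun n : ℕ =>
        ((ascPochhammer ℝ n).eval |s/2| / n.factorial * z ^ n)
          * (Real.Gamma (s/2 + 1) ^ 2 / (2 * Real.Gamma (s + 2)))) :=
      (hasSum_binomial_real |s/2| hz0 hz1).summable.mul_right _
    refine Summable.of_nonneg_of_le (fun n => ?_) (fun n => ?_) hmaj
    · rw [hnormint n]
      have := Real.Gamma_pos_of_pos (show (0:ℝ) < s/2 + 1 + n by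
        linarith [Nat.cast_nonneg (α := ℝ) n])
      have := Real.Gamma_pos_of_pos (show (0:ℝ) < s + 2 + n by
        linarith [Nat.cast_nonneg (α := ℝ) n])
      positivity
    · rw [hnormint n]
      rw [Real.Gamma_add_nat ha1 n, Real.Gamma_add_nat hs2 n]
      have hposc : (0:ℝ) < (ascPochhammer ℝ n).eval (s + 2) := ascPochhammer_pos n _ hs2
      have hpos1 : (0:ℝ) < (ascPochhammer ℝ n).eval (s/2 + 1) := ascPochhammer_pos n _ ha1
      have hle : (ascPochhammer ℝ n).eval (s/2 + 1) ≤ (ascPochhammer ℝ n).eval (s + 2) :=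
        ascPochhammer_eval_le_of_le ha1.le (by linarith) n
      have hCle : |(ascPochhammer ℝ n).eval (s/2) / n.factorial * z ^ n|
          ≤ (ascPochhammer ℝ n).eval |s/2| / n.factorial * z ^ n := by
        rw [abs_mul, abs_div, _root_.abs_of_nonneg (by positivity : (0:ℝ) ≤ (n.factorial : ℝ)),
          _root_.abs_of_nonneg (pow_nonneg hz0 n)]
        gcongr
        exact abs_ascPochhammer_eval_le (s/2) n
      have hratio : (ascPochhammer ℝ n).eval (s/2 + 1) * Real.Gamma (s/2 + 1)
            * Real.Gamma (s/2 + 1) / (2 * ((ascPochhammer ℝ n).eval (s + 2) * Real.Gamma (s + 2)))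
          ≤ Real.Gamma (s/2 + 1) ^ 2 / (2 * Real.Gamma (s + 2)) := by
        rw [div_le_div_iff₀ (by positivity) (by positivity)]
        nlinarith [mul_le_mul_of_nonneg_right hle
          (by positivity : (0:ℝ) ≤ 2 * Real.Gamma (s/2 + 1) ^ 2 * Real.Gamma (s + 2))]
      have hmajnn : (0:ℝ) ≤ (ascPochhammer ℝ n).eval |s/2| / n.factorial * z ^ n := by
        have h1 := ascPochhammer_eval_nonneg (abs_nonneg (s/2)) n
        positivity
      refine mul_le_mul hCle hratio ?_ hmajnn
      positivity
  -- interchange of sum and integral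
  have hkey := MeasureTheory.integral_tsum_of_summable_integral_norm hFint hsum_norm
  -- the pointwise series identity
  have hSfun : Sfun s z = ∫ t in Set.Ioo (0:ℝ) 1, ∑' n : ℕ, Fterm s z n t := by
    rw [Sfun]
    refine (MeasureTheory.setIntegral_congr_fun measurableSet_Ioo ?_).symm
    intro t ht
    have hx0 : (0:ℝ) ≤ z * t^2 := by positivity
    have hx1 : z * t^2 < 1 := by nlinarith [ht.1, ht.2, hz0, hz1]
    have hb := (hasSum_binomial_real (s/2) hx0 hx1).mul_left
      (t ^ (s + 1) * (1 - t ^ 2) ^ (s / 2))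
    have hb2 := hb.tsum_eq
    calc ∑' n : ℕ, Fterm s z n t
        = ∑' n : ℕ, (t ^ (s + 1) * (1 - t ^ 2) ^ (s / 2))
            * ((ascPochhammer ℝ n).eval (s/2) / n.factorial * (z * t^2) ^ n) := by
          refine tsum_congr fun n => ?_
          simp only [Fterm]
          rw [mul_pow, ← pow_mul]
          ring
      _ = (t ^ (s + 1) * (1 - t ^ 2) ^ (s / 2)) * (1 - z * t^2) ^ (-(s/2)) := hb2
      _ = t ^ (s + 1) * (1 - t ^ 2) ^ (s / 2) * (1 - z * t ^ 2) ^ (-(s / 2)) := by ring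
  -- evaluate each term integral and sum up
  have hterm : ∀ n : ℕ, (∫ t in Set.Ioo (0:ℝ) 1, Fterm s z n t)
      = Real.Gamma (s / 2 + 1) ^ 2 / (2 * Real.Gamma (s + 2))
        * (((ascPochhammer ℝ n).eval (s/2) * (ascPochhammer ℝ n).eval (s/2 + 1)
            / ((ascPochhammer ℝ n).eval (s + 2) * (n.factorial : ℝ))) * z ^ n) := by
    intro n
    have : (∫ t in Set.Ioo (0:ℝ) 1, Fterm s z n t)
        = ((ascPochhammer ℝ n).eval (s/2) / n.factorial * z ^ n)
          * ∫ t in Set.Ioo (0:ℝ) 1, t ^ (s + 1) * (1 - t ^ 2) ^ (s / 2) * t ^ (2 * n) := by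
      rw [← MeasureTheory.integral_const_mul]
      rfl
    rw [this, hJ n, Real.Gamma_add_nat ha1 n, Real.Gamma_add_nat hs2 n]
    have hposc : (0:ℝ) < (ascPochhammer ℝ n).eval (s + 2) := ascPochhammer_pos n _ hs2
    have hfac : (0:ℝ) < (n.factorial : ℝ) := by positivity
    field_simp
  calc Sfun s z = ∫ t in Set.Ioo (0:ℝ) 1, ∑' n : ℕ, Fterm s z n t := hSfun
    _ = ∑' n : ℕ, ∫ t in Set.Ioo (0:ℝ) 1, Fterm s z n t := hkey.symm
    _ = ∑' n : ℕ, Real.Gamma (s / 2 + 1) ^ 2 / (2 * Real.Gamma (s + 2))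
        * (((ascPochhammer ℝ n).eval (s/2) * (ascPochhammer ℝ n).eval (s/2 + 1)
            / ((ascPochhammer ℝ n).eval (s + 2) * (n.factorial : ℝ))) * z ^ n) :=
      tsum_congr hterm
    _ = Real.Gamma (s / 2 + 1) ^ 2 / (2 * Real.Gamma (s + 2))
        * twoF1 (s / 2) (s / 2 + 1) (s + 2) z := by
      rw [tsum_mul_left]
      rfl
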